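/- arXiv:1705.03538 — 2 statements merged into one kernel-verified Lean document; each statement's English description precedes it below -/
import Mathlib

section
/- An isometry between lattice shapes maps lattice vertices to lattice vertices: if S and S' are shapes of the triangular lattice drawing G_D, S' is minimal, σ is a similarity of the plane with scale factor 1 (an isometry) such that S = σ(S'), then for every point p in the plane, p is a vertex of G_D if and only if σ(p) is a vertex of G_D. -/
open Complex Set

/-- The sixth root of unity `ω = e^{iπ/3}` generating the triangular lattice. -/
noncomputable def omg : ℂ := Complex.exp ((Real.pi : ℂ) * Complex.I / 3)

/-- The vertex set of the triangular lattice drawing `G_D`: the Eisenstein integers. -/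
def TriLattice : Set ℂ := {z | ∃ a b : ℤ, z = (a : ℂ) + (b : ℂ) * omg}

lemma omg_eq : omg = (1/2 : ℝ) + (Real.sqrt 3 / 2 : ℝ) * Complex.I := by
  have h : ((Real.pi : ℂ) * Complex.I / 3) = ((Real.pi / 3 : ℝ) : ℂ) * Complex.I := by
    push_cast; ring
  rw [omg, h, Complex.exp_mul_I, ← Complex.ofReal_cos, ← Complex.ofReal_sin,
    Real.cos_pi_div_three, Real.sin_pi_div_three]

lemma omg_sq : omg ^ 2 = omg - 1 := by
  have h3 : ((Real.sqrt 3 : ℝ) : ℂ) ^ 2 = 3 := by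
    rw [← Complex.ofReal_pow, Real.sq_sqrt (by norm_num : (3:ℝ) ≥ 0)]; norm_num
  have hI : Complex.I ^ 2 = -1 := Complex.I_sq
  rw [omg_eq]
  push_cast
  linear_combination (Complex.I^2/4) * h3 + ((3:ℂ)/4) * hI

lemma conj_omg : (starRingEnd ℂ) omg = 1 - omg := by
  rw [omg_eq]
  rw [map_add, map_mul, Complex.conj_I, Complex.conj_ofReal, Complex.conj_ofReal]
  push_cast
  ring

namespace TriLattice

lemma mem_iff {z : ℂ} : z ∈ TriLattice ↔ ∃ a b : ℤ, z = (a : ℂ) + (b : ℂ) * omg := Iff.rfl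

lemma one_mem : (1 : ℂ) ∈ TriLattice := ⟨1, 0, by norm_num⟩

lemma add_mem {z w : ℂ} (hz : z ∈ TriLattice) (hw : w ∈ TriLattice) : z + w ∈ TriLattice := by
  obtain ⟨a, b, rfl⟩ := hz; obtain ⟨c, d, rfl⟩ := hw
  exact ⟨a + c, b + d, by push_cast; ring⟩

lemma neg_mem {z : ℂ} (hz : z ∈ TriLattice) : -z ∈ TriLattice := by
  obtain ⟨a, b, rfl⟩ := hz
  exact ⟨-a, -b, by push_cast; ring⟩

lemma sub_mem {z w : ℂ} (hz : z ∈ TriLattice) (hw : w ∈ TriLattice) : z - w ∈ TriLattice := by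
  rw [sub_eq_add_neg]; exact add_mem hz (neg_mem hw)

lemma mul_mem {z w : ℂ} (hz : z ∈ TriLattice) (hw : w ∈ TriLattice) : z * w ∈ TriLattice := by
  obtain ⟨a, b, rfl⟩ := hz; obtain ⟨c, d, rfl⟩ := hw
  refine ⟨a * c - b * d, a * d + b * c + b * d, ?_⟩
  have h := omg_sq
  push_cast
  linear_combination ((b : ℂ) * d) * h

lemma conj_mem {z : ℂ} (hz : z ∈ TriLattice) : (starRingEnd ℂ) z ∈ TriLattice := by
  obtain ⟨a, b, rfl⟩ := hz
  refine ⟨a + b, -b, ?_⟩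
  rw [map_add, map_mul, map_intCast, map_intCast, conj_omg]
  push_cast; ring

lemma inv_mem_of_abs_one {z : ℂ} (hz : z ∈ TriLattice) (h1 : ‖z‖ = 1) :
    (starRingEnd ℂ) z * z = 1 ∧ (starRingEnd ℂ) z ∈ TriLattice := by
  refine ⟨?_, conj_mem hz⟩
  have : ((Complex.normSq z : ℝ) : ℂ) = 1 := by
    rw [← Complex.sq_norm, h1]; norm_num
  rw [mul_comm, Complex.mul_conj, this]

end TriLattice

noncomputable def phi (u z : ℂ) : ℝ := (u * z).re

lemma phi_linear (u : ℂ) : IsLinearMap ℝ (phi u) := by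
  constructor
  · intro z w; simp [phi, mul_add]
  · intro s z
    simp [phi, Complex.real_smul, Complex.mul_re]
    ring

lemma phi_add (u z w : ℂ) : phi u (z + w) = phi u z + phi u w := (phi_linear u).map_add z w

lemma vertexBound (u : ℂ) (V : Finset ℂ) {z : ℂ} (hz : z ∈ convexHull ℝ (V : Set ℂ)) :
    ∃ v ∈ V, phi u z ≤ phi u v := by
  have hne : V.Nonempty := by
    rcases V.eq_empty_or_nonempty with h | h
    · subst h; simp at hz
    · exact h
  set M := V.sup' hne (phi u) with hM
  have hsub : (V : Set ℂ) ⊆ {w | phi u w ≤ M} := fun v hv => Finset.le_sup' (phi u) hv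
  have hhull := convexHull_min hsub (convex_halfSpace_le (phi_linear u) M)
  obtain ⟨v, hv, hveq⟩ := Finset.exists_mem_eq_sup' hne (phi u)
  exact ⟨v, hv, le_of_le_of_eq (hhull hz) hveq⟩

lemma vertexMax (u : ℂ) (V : Finset ℂ)
    (hgen : ∀ p ∈ V, ∀ q ∈ V, p ≠ q → phi u p ≠ phi u q)
    {z : ℂ} (hz : z ∈ convexHull ℝ (V : Set ℂ)) (hmax : ∀ v ∈ V, phi u v ≤ phi u z) :
    z ∈ V := by
  have hne : V.Nonempty := by
    rcases V.eq_empty_or_nonempty with h | h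
    · subst h; simp at hz
    · exact h
  rw [Finset.convexHull_eq] at hz
  obtain ⟨w, hw0, hw1, hcm⟩ := hz
  have hzsum : z = ∑ v ∈ V, w v • v := by
    rw [← hcm, Finset.centerMass_eq_of_sum_1 _ _ hw1]; rfl
  obtain ⟨v₀, hv₀, hv₀max⟩ := V.exists_max_image (phi u) hne
  -- phi u z = ∑ w v * phi u v
  have hphiz : phi u z = ∑ v ∈ V, w v * phi u v := by
    have hL := map_sum (IsLinearMap.mk' (phi u) (phi_linear u)) (fun v => w v • v) V
    simp only [IsLinearMap.mk'_apply] at hL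
    rw [hzsum, hL]
    refine Finset.sum_congr rfl fun v _ => ?_
    have := (phi_linear u).map_smul (w v) v
    simpa using this
  -- z attains at least phi u v₀, and the sum is ≤ phi u v₀
  have hle : ∀ v ∈ V, w v * phi u v ≤ w v * phi u v₀ := fun v hv =>
    mul_le_mul_of_nonneg_left (hv₀max v hv) (hw0 v hv)
  have hsumle : phi u z ≤ phi u v₀ := by
    rw [hphiz]
    calc ∑ v ∈ V, w v * phi u v ≤ ∑ v ∈ V, w v * phi u v₀ := Finset.sum_le_sum hle
    _ = phi u v₀ := by rw [← Finset.sum_mul, hw1, one_mul]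
  have heq : phi u z = phi u v₀ := le_antisymm hsumle (hmax v₀ hv₀)
  -- so each term with phi u v < phi u v₀ has w v = 0
  have hzero : ∀ v ∈ V, v ≠ v₀ → w v = 0 := by
    intro v hv hne'
    by_contra hwv
    have hwvpos : 0 < w v := lt_of_le_of_ne (hw0 v hv) (Ne.symm hwv)
    have hstrict : phi u v < phi u v₀ :=
      lt_of_le_of_ne (hv₀max v hv) (hgen v hv v₀ hv₀ hne')
    have : ∑ x ∈ V, w x * phi u x < ∑ x ∈ V, w x * phi u v₀ :=
      Finset.sum_lt_sum hle ⟨v, hv, by exact mul_lt_mul_of_pos_left hstrict hwvpos⟩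
    rw [← hphiz, ← Finset.sum_mul, hw1, one_mul, heq] at this
    exact lt_irrefl _ this
  have hwv₀ : w v₀ = 1 := by
    have := hw1
    rw [← Finset.add_sum_erase _ _ hv₀] at this
    have h0 : ∑ v ∈ V.erase v₀, w v = 0 :=
      Finset.sum_eq_zero fun v hv => hzero v (Finset.mem_of_mem_erase hv) (Finset.ne_of_mem_erase hv)
    rw [h0, add_zero] at this
    exact this
  have : z = v₀ := by
    rw [hzsum, Finset.sum_eq_single_of_mem v₀ hv₀
      (fun v hv hne' => by rw [hzero v hv hne', zero_smul]), hwv₀, one_smul]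
  rw [this]; exact hv₀

lemma decomp (V : Finset ℂ) (x z : ℂ) (hx : x ∈ V) (hz : z ∈ convexHull ℝ (V : Set ℂ)) :
    ∃ w : ℂ → ℝ, (∀ v ∈ V, 0 ≤ w v) ∧ z - x = ∑ v ∈ V.erase x, w v • (v - x) := by
  rw [Finset.convexHull_eq] at hz
  obtain ⟨w, hw0, hw1, hcm⟩ := hz
  refine ⟨w, hw0, ?_⟩
  have hzsum : z = ∑ v ∈ V, w v • v := by
    rw [← hcm, Finset.centerMass_eq_of_sum_1 _ _ hw1]; rfl
  have hkey : z - x = ∑ v ∈ V, w v • (v - x) := by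
    calc z - x = ∑ v ∈ V, w v • v - (∑ v ∈ V, w v) • x := by rw [hzsum, hw1, one_smul]
    _ = ∑ v ∈ V, (w v • v - w v • x) := by
        rw [Finset.sum_smul, ← Finset.sum_sub_distrib]
    _ = ∑ v ∈ V, w v • (v - x) := by simp [smul_sub]
  rw [hkey, ← Finset.add_sum_erase _ _ hx]
  simp

lemma phi_smulC (u : ℂ) (t : ℝ) (e : ℂ) : phi u ((t : ℂ) * e) = t * phi u e := by
  simp only [phi]
  rw [show u * ((t:ℂ) * e) = (t:ℂ) * (u * e) by ring, Complex.re_ofReal_mul]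

lemma im_conj_anti (z w : ℂ) : (z * (starRingEnd ℂ) w).im = -((w * (starRingEnd ℂ) z).im) := by
  simp [Complex.mul_im]; ring

lemma im_conj_smul (z : ℂ) (t : ℝ) (e : ℂ) :
    (z * (starRingEnd ℂ) ((t:ℂ) * e)).im = t * (z * (starRingEnd ℂ) e).im := by
  rw [map_mul, Complex.conj_ofReal,
    show z * ((t:ℂ) * (starRingEnd ℂ) e) = (t:ℂ) * (z * (starRingEnd ℂ) e) by ring,
    Complex.im_ofReal_mul]

lemma im_smul_conj (z : ℂ) (t : ℝ) (e : ℂ) :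
    (((t:ℂ) * e) * (starRingEnd ℂ) z).im = t * (e * (starRingEnd ℂ) z).im := by
  rw [show ((t:ℂ) * e) * (starRingEnd ℂ) z = (t:ℂ) * (e * (starRingEnd ℂ) z) by ring,
    Complex.im_ofReal_mul]

/-- An edge of `G_D`: a unit segment between two lattice vertices at distance 1. -/
def IsEdgeGD (e : Set ℂ) : Prop :=
  ∃ u v : ℂ, u ∈ TriLattice ∧ v ∈ TriLattice ∧ ‖u - v‖ = 1 ∧ e = segment ℝ u v

/-- A face of `G_D`: a unit equilateral triangle with lattice vertices. -/
def IsFaceGD (f : Set ℂ) : Prop :=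
  ∃ u v w : ℂ, u ∈ TriLattice ∧ v ∈ TriLattice ∧ w ∈ TriLattice ∧
    ‖u - v‖ = 1 ∧ ‖v - w‖ = 1 ∧ ‖u - w‖ = 1 ∧
    f = convexHull ℝ {u, v, w}

/-- A shape: a nonempty connected finite union of edges and faces of `G_D`. -/
def IsShape (S : Set ℂ) : Prop :=
  S.Nonempty ∧ IsConnected S ∧
    ∃ F : Set (Set ℂ), F.Finite ∧ (∀ e ∈ F, IsEdgeGD e ∨ IsFaceGD e) ∧ S = ⋃₀ F

/-- Uniform description of a piece: vertex finset. -/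
def GoodPiece (e : Set ℂ) (V : Finset ℂ) : Prop :=
  (↑V ⊆ TriLattice) ∧ (V.card = 2 ∨ V.card = 3) ∧
    (∀ p ∈ V, ∀ q ∈ V, p ≠ q → ‖p - q‖ = 1) ∧ e = convexHull ℝ ↑V

lemma piece_data {e : Set ℂ} (h : IsEdgeGD e ∨ IsFaceGD e) : ∃ V : Finset ℂ, GoodPiece e V := by
  classical
  rcases h with ⟨u, v, hu, hv, hd, he⟩ | ⟨u, v, w, hu, hv, hw, duv, dvw, duw, he⟩
  · have hne : u ≠ v := by
      intro h; rw [h] at hd; simp at hd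
    refine ⟨{u, v}, ?_, ?_, ?_, ?_⟩
    · intro z hz
      simp only [Finset.coe_insert, Finset.coe_singleton, Set.mem_insert_iff,
        Set.mem_singleton_iff] at hz
      rcases hz with rfl | rfl <;> assumption
    · left; rw [Finset.card_insert_of_notMem (by simpa using hne), Finset.card_singleton]
    · intro p hp q hq hpq
      simp only [Finset.mem_insert, Finset.mem_singleton] at hp hq
      rcases hp with rfl | rfl <;> rcases hq with rfl | rfl
      · exact absurd rfl hpq
      · exact hd
      · rw [norm_sub_rev]; exact hd
      · exact absurd rfl hpq
    · rw [he, ← convexHull_pair]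
      congr 1
      simp
  · have huv : u ≠ v := by intro h; rw [h] at duv; simp at duv
    have hvw : v ≠ w := by intro h; rw [h] at dvw; simp at dvw
    have huw : u ≠ w := by intro h; rw [h] at duw; simp at duw
    refine ⟨{u, v, w}, ?_, ?_, ?_, ?_⟩
    · intro z hz
      simp only [Finset.coe_insert, Finset.coe_singleton, Set.mem_insert_iff,
        Set.mem_singleton_iff] at hz
      rcases hz with rfl | rfl | rfl <;> assumption
    · right
      rw [Finset.card_insert_of_notMem (by simp [huv, huw]),
        Finset.card_insert_of_notMem (by simpa using hvw), Finset.card_singleton]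
    · intro p hp q hq hpq
      simp only [Finset.mem_insert, Finset.mem_singleton] at hp hq
      rcases hp with rfl | rfl | rfl <;> rcases hq with rfl | rfl | rfl <;>
        first
          | exact absurd rfl hpq
          | assumption
          | (rw [norm_sub_rev]; assumption)
    · rw [he]
      congr 1
      simp [Finset.coe_insert]

lemma shape_pieces {F : Set (Set ℂ)} (hFd : ∀ e ∈ F, IsEdgeGD e ∨ IsFaceGD e) :
    ∃ Vf : Set ℂ → Finset ℂ, ∀ e ∈ F, GoodPiece e (Vf e) := by
  classical
  have h : ∀ e : Set ℂ, ∃ V : Finset ℂ, e ∈ F → GoodPiece e V := by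
    intro e
    by_cases he : e ∈ F
    · obtain ⟨V, hV⟩ := piece_data (hFd e he)
      exact ⟨V, fun _ => hV⟩
    · exact ⟨∅, fun h => absurd h he⟩
  choose Vf hVf using h
  exact ⟨Vf, fun e he => hVf e he⟩
lemma im_pair_left (A B : ℂ) (b c : ℝ) :
    (A * (starRingEnd ℂ) (b • A + c • B)).im = c * (A * (starRingEnd ℂ) B).im := by
  have h0 : (A * (starRingEnd ℂ) A).im = 0 := by
    rw [Complex.mul_conj]; simp
  rw [map_add, Complex.real_smul, Complex.real_smul, map_mul, map_mul,
    Complex.conj_ofReal, Complex.conj_ofReal]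
  rw [show A * ((b:ℂ) * (starRingEnd ℂ) A + (c:ℂ) * (starRingEnd ℂ) B)
      = (b:ℂ) * (A * (starRingEnd ℂ) A) + (c:ℂ) * (A * (starRingEnd ℂ) B) by ring]
  rw [Complex.add_im, Complex.im_ofReal_mul, Complex.im_ofReal_mul, h0]
  ring

lemma im_pair_right (A B : ℂ) (b c : ℝ) :
    ((b • A + c • B) * (starRingEnd ℂ) A).im = c * (B * (starRingEnd ℂ) A).im := by
  have h0 : (A * (starRingEnd ℂ) A).im = 0 := by
    rw [Complex.mul_conj]; simp
  rw [Complex.real_smul, Complex.real_smul]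
  rw [show ((b:ℂ) * A + (c:ℂ) * B) * (starRingEnd ℂ) A
      = (b:ℂ) * (A * (starRingEnd ℂ) A) + (c:ℂ) * (B * (starRingEnd ℂ) A) by ring]
  rw [Complex.add_im, Complex.im_ofReal_mul, Complex.im_ofReal_mul, h0]
  ring

lemma ext2 {F : Set (Set ℂ)} (hFfin : F.Finite) {Vf : Set ℂ → Finset ℂ}
    (hV : ∀ e ∈ F, GoodPiece e (Vf e)) {S : Set ℂ} (hSF : S = ⋃₀ F)
    {u : ℂ} (hgen : ∀ e ∈ F, ∀ p ∈ Vf e, ∀ q ∈ Vf e, p ≠ q → phi u p ≠ phi u q)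
    {x : ℂ} (hxS : x ∈ S) (hmax : ∀ z ∈ S, phi u z ≤ phi u x) :
    x ∈ TriLattice ∧
    ∃ ε : ℝ, 0 < ε ∧ ε ≤ 1 ∧ ∃ T : Finset ℂ, T.Nonempty ∧
      (∀ ζ ∈ T, ζ ∈ TriLattice ∧ ‖ζ‖ = 1 ∧
        ∀ t : ℝ, 0 < t → t < ε → x + (t:ℂ) * ζ ∈ S) ∧
      (∀ (e : ℂ) (t : ℝ), ‖e‖ = 1 → 0 < t → t < ε → x + (t:ℂ) * e ∈ S →
        phi u e < 0 ∧ (∃ ζ ∈ T, 0 ≤ (ζ * (starRingEnd ℂ) e).im) ∧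
          (∃ ζ ∈ T, 0 ≤ (e * (starRingEnd ℂ) ζ).im)) := by
  classical
  -- pieces containing x have x as a vertex
  have hxV : ∀ e ∈ F, x ∈ e → x ∈ Vf e := by
    intro e he hxe
    obtain ⟨hlat, hcard, hdist, hhull⟩ := hV e he
    refine vertexMax u (Vf e) (hgen e he) ?_ ?_
    · rw [hhull] at hxe; exact hxe
    · intro v hv
      apply hmax
      rw [hSF]
      exact ⟨e, he, by rw [hhull]; exact subset_convexHull ℝ _ (Finset.mem_coe.mpr hv)⟩
  obtain ⟨P₀, hP₀F, hxP₀⟩ : ∃ P ∈ F, x ∈ P := by rw [hSF] at hxS; exact hxS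
  have hxLat : x ∈ TriLattice := (hV P₀ hP₀F).1 (Finset.mem_coe.mpr (hxV P₀ hP₀F hxP₀))
  -- local radius
  set K := ⋃₀ {e ∈ F | x ∉ e} with hK
  have hKclosed : IsClosed K := by
    rw [hK, sUnion_eq_biUnion]
    apply Set.Finite.isClosed_biUnion (hFfin.subset (Set.sep_subset _ _))
    intro e he
    rw [(hV e he.1).2.2.2]
    exact ((Vf e).finite_toSet.isCompact_convexHull (𝕜 := ℝ)).isClosed
  have hxK : x ∉ K := by
    rintro ⟨e, ⟨heF, hxe⟩, hxe'⟩
    exact hxe hxe'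
  obtain ⟨ε₀, hε₀, hball⟩ := Metric.isOpen_iff.1 hKclosed.isOpen_compl x hxK
  set ε := min ε₀ 1 with hε
  have hεpos : 0 < ε := lt_min hε₀ one_pos
  have hε1 : ε ≤ 1 := min_le_right _ _
  -- localization
  have hloc : ∀ z : ℂ, z ∈ S → dist z x < ε → ∃ e ∈ F, x ∈ e ∧ z ∈ e := by
    intro z hz hd
    rw [hSF] at hz
    obtain ⟨e, heF, hze⟩ := hz
    refine ⟨e, heF, ?_, hze⟩
    by_contra hxe
    have hzK : z ∈ K := ⟨e, ⟨heF, hxe⟩, hze⟩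
    have hzK' : z ∈ Kᶜ := hball (by
      rw [Metric.mem_ball]; exact lt_of_lt_of_le hd (min_le_left _ _))
    exact hzK' hzK
  -- the finset of outgoing unit lattice directions
  set T : Finset ℂ := (hFfin.toFinset.filter (fun e => x ∈ e)).biUnion
      (fun e => ((Vf e).erase x).image (fun v => v - x)) with hT
  have hmemT : ∀ ζ : ℂ, ζ ∈ T ↔ ∃ e, e ∈ F ∧ x ∈ e ∧ ∃ v, v ∈ (Vf e).erase x ∧ v - x = ζ := by
    intro ζ
    simp only [hT, Finset.mem_biUnion, Finset.mem_filter, Set.Finite.mem_toFinset,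
      Finset.mem_image]
    constructor
    · rintro ⟨e, ⟨heF, hxe⟩, v, hv, hζ⟩; exact ⟨e, heF, hxe, v, hv, hζ⟩
    · rintro ⟨e, heF, hxe, v, hv, hζ⟩; exact ⟨e, ⟨heF, hxe⟩, v, hv, hζ⟩
  have hTne : T.Nonempty := by
    have hx0 : x ∈ Vf P₀ := hxV P₀ hP₀F hxP₀
    have hcard := (hV P₀ hP₀F).2.1
    have herase : 0 < ((Vf P₀).erase x).card := by
      rw [Finset.card_erase_of_mem hx0]
      rcases hcard with h | h <;> rw [h] <;> norm_num
    obtain ⟨v, hv⟩ := Finset.card_pos.1 herase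
    exact ⟨v - x, (hmemT _).2 ⟨P₀, hP₀F, hxP₀, v, hv, rfl⟩⟩
  have hTprop : ∀ ζ ∈ T, ζ ∈ TriLattice ∧ ‖ζ‖ = 1 ∧
      ∀ t : ℝ, 0 < t → t < ε → x + (t:ℂ) * ζ ∈ S := by
    intro ζ hζ
    obtain ⟨e, heF, hxe, v, hv, rfl⟩ := (hmemT ζ).1 hζ
    obtain ⟨hlat, hcard, hdist, hhull⟩ := hV e heF
    have hvV : v ∈ Vf e := Finset.mem_of_mem_erase hv
    have hvx : v ≠ x := Finset.ne_of_mem_erase hv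
    have hxVe : x ∈ Vf e := hxV e heF hxe
    refine ⟨TriLattice.sub_mem (hlat (Finset.mem_coe.mpr hvV)) (hlat (Finset.mem_coe.mpr hxVe)),
      hdist v hvV x hxVe hvx, ?_⟩
    intro t ht htε
    have ht1 : t ≤ 1 := le_trans (le_of_lt htε) hε1
    have hmem : (1 - t) • x + t • v ∈ convexHull ℝ (↑(Vf e) : Set ℂ) :=
      (convex_convexHull ℝ _) (subset_convexHull ℝ _ (Finset.mem_coe.mpr hxVe))
        (subset_convexHull ℝ _ (Finset.mem_coe.mpr hvV)) (by linarith) (le_of_lt ht)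
        (by ring)
    have heq : x + (t:ℂ) * (v - x) = (1 - t) • x + t • v := by
      rw [Complex.real_smul, Complex.real_smul]
      push_cast
      ring
    rw [hSF]
    exact ⟨e, heF, by rw [hhull]; rw [heq]; exact hmem⟩
  refine ⟨hxLat, ε, hεpos, hε1, T, hTne, hTprop, ?_⟩
  intro e t habs ht htε hzS
  set z := x + (t:ℂ) * e with hz
  have hdz : dist z x < ε := by
    rw [Complex.dist_eq, hz, add_sub_cancel_left, norm_mul, Complex.norm_real, Real.norm_eq_abs, habs,
      mul_one, abs_of_pos ht]
    exact htε
  obtain ⟨P, hPF, hxP, hzP⟩ := hloc z hzS hdz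
  obtain ⟨hlat, hcard, hdist, hhull⟩ := hV P hPF
  have hxVP : x ∈ Vf P := hxV P hPF hxP
  have htene : (t:ℂ) * e ≠ 0 := by
    intro h
    have : ‖(t:ℂ) * e‖ = 0 := by rw [h]; simp
    rw [norm_mul, Complex.norm_real, Real.norm_eq_abs, habs, mul_one, abs_of_pos ht] at this
    exact absurd this (ne_of_gt ht)
  have hzx : z ≠ x := by
    intro h
    apply htene
    rw [hz] at h
    have h' : x + (t:ℂ) * e = x + 0 := by rw [h, add_zero]
    exact add_left_cancel h'
  -- phi u e < 0
  have hphieq : phi u z = phi u x + t * phi u e := by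
    rw [hz, phi_add, phi_smulC]
  have hle : phi u z ≤ phi u x := hmax z hzS
  have hphile : phi u e ≤ 0 := by nlinarith
  have hphilt : phi u e < 0 := by
    rcases lt_or_eq_of_le hphile with h | h
    · exact h
    · exfalso
      have hzmax : phi u z = phi u x := by rw [hphieq, h]; ring
      have hzV : z ∈ Vf P := by
        refine vertexMax u (Vf P) (hgen P hPF) (by rw [hhull] at hzP; exact hzP) ?_
        intro v hv
        rw [hzmax]
        apply hmax
        rw [hSF]
        exact ⟨P, hPF, by rw [hhull]; exact subset_convexHull ℝ _ (Finset.mem_coe.mpr hv)⟩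
      exact hgen P hPF z hzV x hxVP hzx hzmax
  refine ⟨hphilt, ?_⟩
  -- decomposition
  obtain ⟨w, hw0, hdec⟩ := decomp (Vf P) x z hxVP (by rw [hhull] at hzP; exact hzP)
  have hdec' : (t:ℂ) * e = ∑ v ∈ (Vf P).erase x, w v • (v - x) := by
    rw [← hdec, hz]; ring
  rcases hcard with h2 | h3
  · -- segment piece
    have hc1 : ((Vf P).erase x).card = 1 := by
      rw [Finset.card_erase_of_mem hxVP, h2]
    obtain ⟨q, hq⟩ := Finset.card_eq_one.1 hc1
    have hqE : q ∈ (Vf P).erase x := by rw [hq]; exact Finset.mem_singleton_self q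
    rw [hq, Finset.sum_singleton] at hdec'
    set A := q - x with hA
    have hAT : A ∈ T := (hmemT _).2 ⟨P, hPF, hxP, q, hqE, rfl⟩
    have h0 : (A * (starRingEnd ℂ) A).im = 0 := by rw [Complex.mul_conj]; simp
    have h1 : t * (A * (starRingEnd ℂ) e).im = 0 := by
      rw [← im_conj_smul, hdec', Complex.real_smul, im_conj_smul, h0, mul_zero]
    have h2' : t * (e * (starRingEnd ℂ) A).im = 0 := by
      rw [← im_smul_conj, hdec', Complex.real_smul, im_smul_conj, h0, mul_zero]
    have hA1 : (A * (starRingEnd ℂ) e).im = 0 := by nlinarith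
    have hA2 : (e * (starRingEnd ℂ) A).im = 0 := by nlinarith
    exact ⟨⟨A, hAT, le_of_eq hA1.symm⟩, ⟨A, hAT, le_of_eq hA2.symm⟩⟩
  · -- triangle piece
    have hc2 : ((Vf P).erase x).card = 2 := by
      rw [Finset.card_erase_of_mem hxVP, h3]
    obtain ⟨q, r, hqr, hpair⟩ := Finset.card_eq_two.1 hc2
    have hqE : q ∈ (Vf P).erase x := by rw [hpair]; simp
    have hrE : r ∈ (Vf P).erase x := by rw [hpair]; simp
    rw [hpair, Finset.sum_pair hqr] at hdec'
    set A := q - x with hA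
    set B := r - x with hB
    have hAT : A ∈ T := (hmemT _).2 ⟨P, hPF, hxP, q, hqE, rfl⟩
    have hBT : B ∈ T := (hmemT _).2 ⟨P, hPF, hxP, r, hrE, rfl⟩
    have hwq : 0 ≤ w q := hw0 q (Finset.mem_of_mem_erase hqE)
    have hwr : 0 ≤ w r := hw0 r (Finset.mem_of_mem_erase hrE)
    have hAe : t * (A * (starRingEnd ℂ) e).im = w r * (A * (starRingEnd ℂ) B).im := by
      rw [← im_conj_smul, hdec', im_pair_left]
    have hBe : t * (B * (starRingEnd ℂ) e).im = w q * (B * (starRingEnd ℂ) A).im := by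
      rw [← im_conj_smul, hdec', show w q • A + w r • B = w r • B + w q • A by ring,
        im_pair_left]
    have heA : t * (e * (starRingEnd ℂ) A).im = w r * (B * (starRingEnd ℂ) A).im := by
      rw [← im_smul_conj, hdec', im_pair_right]
    have heB : t * (e * (starRingEnd ℂ) B).im = w q * (A * (starRingEnd ℂ) B).im := by
      rw [← im_smul_conj, hdec', show w q • A + w r • B = w r • B + w q • A by ring,
        im_pair_right]
    have hanti : (B * (starRingEnd ℂ) A).im = -((A * (starRingEnd ℂ) B).im) := im_conj_anti B A
    constructor
    · rcases le_or_gt 0 ((A * (starRingEnd ℂ) B).im) with hs | hs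
      · refine ⟨A, hAT, ?_⟩
        nlinarith [mul_nonneg hwr hs]
      · refine ⟨B, hBT, ?_⟩
        rw [hanti] at hBe
        nlinarith [mul_nonneg hwq (le_of_lt (neg_pos.2 hs))]
    · rcases le_or_gt 0 ((A * (starRingEnd ℂ) B).im) with hs | hs
      · refine ⟨B, hBT, ?_⟩
        nlinarith [mul_nonneg hwq hs]
      · refine ⟨A, hAT, ?_⟩
        rw [hanti] at heA
        nlinarith [mul_nonneg hwr (le_of_lt (neg_pos.2 hs))]
noncomputable def tau (u z : ℂ) : ℝ := (u * z).im / (u * z).re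

lemma tau_le_iff {u e w : ℂ} (he : (u * e).re < 0) (hw : (u * w).re < 0) :
    tau u e ≤ tau u w ↔ (u * e).im * (u * w).re ≤ (u * w).im * (u * e).re := by
  rw [tau, tau, show (u*e).im / (u*e).re = -(u*e).im / -((u*e).re) by rw [neg_div_neg_eq],
    show (u*w).im / (u*w).re = -(u*w).im / -((u*w).re) by rw [neg_div_neg_eq],
    div_le_div_iff₀ (by linarith) (by linarith)]
  constructor <;> intro h <;> nlinarith

lemma im_form {u e w : ℂ} (hu : ‖u‖ = 1) :
    (w * (starRingEnd ℂ) e).im = (u * w).im * (u * e).re - (u * w).re * (u * e).im := by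
  have hn : Complex.normSq u = 1 := by
    rw [← Complex.sq_norm, hu]; norm_num
  have key : (u * w) * (starRingEnd ℂ) (u * e) = w * (starRingEnd ℂ) e := by
    rw [map_mul, show u * w * ((starRingEnd ℂ) u * (starRingEnd ℂ) e)
      = (u * (starRingEnd ℂ) u) * (w * (starRingEnd ℂ) e) by ring, Complex.mul_conj, hn]
    simp
  have h2 := congrArg Complex.im key
  rw [Complex.mul_im] at h2
  simp only [Complex.conj_re, Complex.conj_im] at h2
  linarith

/-- order comparison from the geometric `im`-criterion -/
lemma tau_le_of_im {u e w : ℂ} (hu : ‖u‖ = 1) (he : (u * e).re < 0)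
    (hw : (u * w).re < 0) (h : 0 ≤ (w * (starRingEnd ℂ) e).im) : tau u e ≤ tau u w := by
  rw [tau_le_iff he hw]
  rw [im_form hu] at h
  linarith

lemma tau_ge_of_im {u e w : ℂ} (hu : ‖u‖ = 1) (he : (u * e).re < 0)
    (hw : (u * w).re < 0) (h : 0 ≤ (e * (starRingEnd ℂ) w).im) : tau u w ≤ tau u e := by
  rw [tau_le_iff hw he]
  rw [im_form hu] at h
  linarith

lemma tau_antisymm {u e w : ℂ} (hu : ‖u‖ = 1) (he1 : ‖e‖ = 1)
    (hw1 : ‖w‖ = 1) (he : (u * e).re < 0) (hw : (u * w).re < 0)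
    (h : tau u e = tau u w) : e = w := by
  have hcross : (u * e).im * (u * w).re = (u * w).im * (u * e).re := by
    have h1 := (tau_le_iff he hw).1 (le_of_eq h)
    have h2 := (tau_le_iff hw he).1 (le_of_eq h.symm)
    linarith
  have him : (w * (starRingEnd ℂ) e).im = 0 := by
    rw [im_form hu]; linarith
  set c := w * (starRingEnd ℂ) e with hc
  have hcn : Complex.normSq c = 1 := by
    rw [hc, Complex.normSq_mul, Complex.normSq_conj]
    have h1 : Complex.normSq w = 1 := by rw [← Complex.sq_norm, hw1]; norm_num
    have h2 : Complex.normSq e = 1 := by rw [← Complex.sq_norm, he1]; norm_num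
    rw [h1, h2]; norm_num
  have hre : c.re = 1 ∨ c.re = -1 := by
    have : c.re ^ 2 = 1 := by
      rw [Complex.normSq_apply] at hcn
      nlinarith [him]
    have h' : (c.re - 1) * (c.re + 1) = 0 := by nlinarith
    rcases mul_eq_zero.1 h' with h1 | h1
    · left; linarith
    · right; linarith
  have hee : (starRingEnd ℂ) e * e = 1 := by
    rw [mul_comm, Complex.mul_conj]
    have : Complex.normSq e = 1 := by rw [← Complex.sq_norm, he1]; norm_num
    rw [this]; simp
  rcases hre with h1 | h1
  · have hc1 : c = 1 := Complex.ext (by simpa using h1) (by simpa using him)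
    have : w * ((starRingEnd ℂ) e * e) = e := by
      rw [← mul_assoc, ← hc, hc1, one_mul]
    rw [hee, mul_one] at this
    exact this.symm
  · exfalso
    have hc1 : c = -1 := Complex.ext (by simpa using h1) (by simpa using him)
    have hwe : w = -e := by
      have : w * ((starRingEnd ℂ) e * e) = -e := by
        rw [← mul_assoc, ← hc, hc1]; ring
      rwa [hee, mul_one] at this
    rw [hwe] at hw
    rw [show u * -e = -(u*e) by ring, Complex.neg_re] at hw
    linarith
lemma ext1 {F : Set (Set ℂ)} (hFfin : F.Finite) {Vf : Set ℂ → Finset ℂ}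
    (hV : ∀ e ∈ F, GoodPiece e (Vf e)) {S : Set ℂ} (hSF : S = ⋃₀ F)
    (hSne : S.Nonempty) (u : ℂ) :
    ∃ y ∈ S, ∀ z ∈ S, phi u z ≤ phi u y := by
  have hScomp : IsCompact S := by
    rw [hSF, sUnion_eq_biUnion]
    apply hFfin.isCompact_biUnion
    intro e he
    rw [(hV e he).2.2.2]
    exact (Vf e).finite_toSet.isCompact_convexHull (𝕜 := ℝ)
  have hcont : Continuous (phi u) := by
    have : Continuous fun z : ℂ => u * z := continuous_const.mul continuous_id
    exact Complex.continuous_re.comp this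
  obtain ⟨z₀, hz₀S, hz₀⟩ := hScomp.exists_isMaxOn hSne hcont.continuousOn
  have hz₀' : ∀ z ∈ S, phi u z ≤ phi u z₀ := fun z hz => hz₀ hz
  obtain ⟨e, heF, hz₀e⟩ : ∃ e ∈ F, z₀ ∈ e := by rw [hSF] at hz₀S; exact hz₀S
  obtain ⟨hlat, hcard, hdist, hhull⟩ := hV e heF
  obtain ⟨v, hvV, hvle⟩ := vertexBound u (Vf e) (by rw [hhull] at hz₀e; exact hz₀e)
  have hvS : v ∈ S := by
    rw [hSF]
    exact ⟨e, heF, by rw [hhull]; exact subset_convexHull ℝ _ (Finset.mem_coe.mpr hvV)⟩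
  exact ⟨v, hvS, fun z hz => le_trans (hz₀' z hz) hvle⟩

lemma isometry_class {σ : ℂ → ℂ}
    (hσ : ∀ p q : ℂ, ‖σ p - σ q‖ = ‖p - q‖) :
    ∃ a b : ℂ, ‖a‖ = 1 ∧
      ((∀ z, σ z = a * z + b) ∨ (∀ z, σ z = a * (starRingEnd ℂ) z + b)) := by
  set b := σ 0 with hb
  set τ : ℂ → ℂ := fun z => σ z - b with hτdef
  have hτ : ∀ p q, ‖τ p - τ q‖ = ‖p - q‖ := by
    intro p q
    rw [hτdef]
    simp only
    rw [show σ p - b - (σ q - b) = σ p - σ q by ring]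
    exact hσ p q
  have hτ0 : τ 0 = 0 := by rw [hτdef]; simp [hb]
  have hnormSq : ∀ p q, Complex.normSq (τ p - τ q) = Complex.normSq (p - q) := by
    intro p q
    rw [← Complex.sq_norm, ← Complex.sq_norm, hτ p q]
  have hnorm : ∀ p, Complex.normSq (τ p) = Complex.normSq p := by
    intro p
    have := hnormSq p 0
    rwa [hτ0, sub_zero, sub_zero] at this
  have expand : ∀ z w : ℂ, Complex.normSq (z - w)
      = Complex.normSq z + Complex.normSq w - 2 * (z * (starRingEnd ℂ) w).re := by
    intro z w
    simp only [Complex.normSq_apply, Complex.mul_re, Complex.sub_re, Complex.sub_im,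
      Complex.conj_re, Complex.conj_im]
    ring
  have hinner : ∀ p q, (τ p * (starRingEnd ℂ) (τ q)).re = (p * (starRingEnd ℂ) q).re := by
    intro p q
    have h1 := hnormSq p q
    rw [expand (τ p) (τ q), expand p q, hnorm p, hnorm q] at h1
    linarith
  set a := τ 1 with ha
  have hna : Complex.normSq a = 1 := by
    rw [ha, hnorm 1]; simp
  have habs : ‖a‖ = 1 := by
    rw [Complex.norm_def, hna, Real.sqrt_one]
  set c := τ Complex.I with hc
  have hnc : Complex.normSq c = 1 := by rw [hc, hnorm]; simp
  have hca : (c * (starRingEnd ℂ) a).re = 0 := by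
    have h1 : (c * (starRingEnd ℂ) a).re = (Complex.I * (starRingEnd ℂ) 1).re :=
      hinner Complex.I 1
    rw [h1]
    simp
  have hcan : Complex.normSq (c * (starRingEnd ℂ) a) = 1 := by
    rw [Complex.normSq_mul, Complex.normSq_conj, hnc, hna]; ring
  have haa : a * (starRingEnd ℂ) a = 1 := by
    rw [Complex.mul_conj, hna]; simp
  have hIm : (c * (starRingEnd ℂ) a).im = 1 ∨ (c * (starRingEnd ℂ) a).im = -1 := by
    have h2 : (c * (starRingEnd ℂ) a).im ^ 2 = 1 := by
      rw [Complex.normSq_apply] at hcan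
      nlinarith [hca]
    have h' : ((c * (starRingEnd ℂ) a).im - 1) * ((c * (starRingEnd ℂ) a).im + 1) = 0 := by
      nlinarith
    rcases mul_eq_zero.1 h' with h1 | h1
    · left; linarith
    · right; linarith
  have hζre : ∀ z, (τ z * (starRingEnd ℂ) a).re = z.re := by
    intro z
    have h1 : (τ z * (starRingEnd ℂ) a).re = (z * (starRingEnd ℂ) 1).re := hinner z 1
    simpa using h1
  have hζc : ∀ z, (τ z * (starRingEnd ℂ) c).re = z.im := by
    intro z
    have h1 : (τ z * (starRingEnd ℂ) c).re = (z * (starRingEnd ℂ) Complex.I).re :=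
      hinner z Complex.I
    rw [h1]
    simp [Complex.mul_re]
  have hτz : ∀ z, τ z = (τ z * (starRingEnd ℂ) a) * a := by
    intro z
    rw [mul_assoc, mul_comm ((starRingEnd ℂ) a) a, haa, mul_one]
  rcases hIm with hI1 | hI1
  · -- c * conj a = I, rotation case
    have hcaI : c * (starRingEnd ℂ) a = Complex.I := Complex.ext (by simpa using hca) (by simpa using hI1)
    refine ⟨a, b, habs, Or.inl ?_⟩
    intro z
    have hcexp : c = Complex.I * a := by
      have : c * ((starRingEnd ℂ) a * a) = Complex.I * a := by
        rw [← mul_assoc, hcaI]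
      rwa [mul_comm ((starRingEnd ℂ) a) a, haa, mul_one] at this
    have him : (τ z * (starRingEnd ℂ) a).im = z.im := by
      have h1 := hζc z
      rw [hcexp] at h1
      rw [map_mul, Complex.conj_I] at h1
      rw [show τ z * (-Complex.I * (starRingEnd ℂ) a) = -Complex.I * (τ z * (starRingEnd ℂ) a) by ring] at h1
      simpa [Complex.mul_re] using h1
    have hζ : τ z * (starRingEnd ℂ) a = z := Complex.ext (hζre z) him
    have : τ z = z * a := by rw [hτz z, hζ]
    rw [hτdef] at this
    simp only at this
    rw [show σ z = (σ z - b) + b by ring, this]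
    ring
  · -- c * conj a = -I, reflection case
    have hcaI : c * (starRingEnd ℂ) a = -Complex.I := Complex.ext (by simpa using hca) (by simpa using hI1)
    refine ⟨a, b, habs, Or.inr ?_⟩
    intro z
    have hcexp : c = -Complex.I * a := by
      have : c * ((starRingEnd ℂ) a * a) = -Complex.I * a := by
        rw [← mul_assoc, hcaI]
      rwa [mul_comm ((starRingEnd ℂ) a) a, haa, mul_one] at this
    have him : (τ z * (starRingEnd ℂ) a).im = -z.im := by
      have h1 := hζc z
      rw [hcexp] at h1
      rw [map_mul, map_neg, Complex.conj_I] at h1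
      rw [show τ z * (- -Complex.I * (starRingEnd ℂ) a) = Complex.I * (τ z * (starRingEnd ℂ) a) by ring] at h1
      have : (Complex.I * (τ z * (starRingEnd ℂ) a)).re = -(τ z * (starRingEnd ℂ) a).im := by
        simp [Complex.mul_re]
      rw [this] at h1
      linarith
    have hζ : τ z * (starRingEnd ℂ) a = (starRingEnd ℂ) z :=
      Complex.ext (by simpa using hζre z) (by simpa using him)
    have : τ z = (starRingEnd ℂ) z * a := by rw [hτz z, hζ]
    rw [hτdef] at this
    simp only at this
    rw [show σ z = (σ z - b) + b by ring, this]
    ring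
lemma exists_generic {W : Set ℂ} (hW : W.Finite) (h0 : (0:ℂ) ∉ W) :
    ∃ d : ℂ, ‖d‖ = 1 ∧ ∀ v ∈ W, ((starRingEnd ℂ) d * v).re ≠ 0 := by
  classical
  set Bad : Set ℂ := ⋃ v ∈ W, {z : ℂ | ‖z‖ = 1 ∧ ((starRingEnd ℂ) z * v).re = 0}
    with hBad
  have hBadFin : Bad.Finite := by
    rw [hBad]
    apply Set.Finite.biUnion hW
    intro v hv
    have hvne : v ≠ 0 := fun h => h0 (h ▸ hv)
    have hvabs : (0:ℝ) < ‖v‖ := by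
      rcases lt_or_eq_of_le (norm_nonneg v) with h | h
      · exact h
      · exact absurd (norm_eq_zero.1 h.symm) hvne
    apply Set.Finite.subset
      ((Set.finite_singleton (-(Complex.I * v / (‖v‖ : ℝ)))).insert
        (Complex.I * v / (‖v‖ : ℝ)))
    rintro z ⟨hz1, hz2⟩
    simp only [Set.mem_insert_iff, Set.mem_singleton_iff]
    set c := (starRingEnd ℂ) z * v with hcd
    have hnz : Complex.normSq z = 1 := by rw [← Complex.sq_norm, hz1]; norm_num
    have hzz : z * (starRingEnd ℂ) z = 1 := by rw [Complex.mul_conj, hnz]; simp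
    have hvzc : v = z * c := by rw [hcd, ← mul_assoc, hzz, one_mul]
    have hcabs : ‖c‖ = ‖v‖ := by
      rw [hcd, norm_mul, Complex.norm_conj, hz1, one_mul]
    have hcim2 : c.im ^ 2 = ‖v‖ ^ 2 := by
      have h1 : Complex.normSq c = c.re^2 + c.im^2 := by rw [Complex.normSq_apply]; ring
      have h2 : Complex.normSq c = ‖c‖ ^ 2 := (Complex.sq_norm c).symm
      rw [hcabs] at h2
      rw [hz2] at h1
      nlinarith [h1, h2]
    have hceq : c = (c.im : ℂ) * Complex.I := by
      apply Complex.ext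
      · simp [hz2]
      · simp
    have habsne : ((‖v‖ : ℝ) : ℂ) ≠ 0 := by
      simp only [ne_eq, Complex.ofReal_eq_zero]
      exact ne_of_gt hvabs
    have hIne : ((‖v‖ : ℝ) : ℂ) * Complex.I ≠ 0 :=
      mul_ne_zero habsne Complex.I_ne_zero
    have hcim : c.im = ‖v‖ ∨ c.im = -‖v‖ := by
      have h' : (c.im - ‖v‖) * (c.im + ‖v‖) = 0 := by nlinarith
      rcases mul_eq_zero.1 h' with h1 | h1
      · left; linarith
      · right; linarith
    rcases hcim with h1 | h1
    · -- z = -(I v / |v|)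
      right
      apply mul_right_cancel₀ hIne
      rw [show -(Complex.I * v / (‖v‖ : ℝ)) * ((‖v‖ : ℝ) * Complex.I)
          = -(Complex.I^2) * v * ((‖v‖ : ℝ) / (‖v‖ : ℝ)) by ring,
        div_self habsne, Complex.I_sq]
      have : z * ((‖v‖:ℝ) * Complex.I) = z * c := by rw [hceq, h1]
      rw [this, ← hvzc]
      ring
    · -- z = I v / |v|
      left
      apply mul_right_cancel₀ hIne
      rw [show Complex.I * v / (‖v‖ : ℝ) * ((‖v‖ : ℝ) * Complex.I)
          = Complex.I^2 * v * ((‖v‖ : ℝ) / (‖v‖ : ℝ)) by ring,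
        div_self habsne, Complex.I_sq]
      have : z * ((‖v‖:ℝ) * Complex.I) = z * (-c) := by
        rw [hceq, h1]; push_cast; ring
      rw [this, show z * (-c) = -(z * c) by ring, ← hvzc]
      ring
  have hmap : Set.InjOn (fun t : ℝ => Complex.exp ((t:ℂ) * Complex.I)) (Set.Ioo (0:ℝ) 1) := by
    intro t1 h1 t2 h2 he
    obtain ⟨n, hn⟩ := Complex.exp_eq_exp_iff_exists_int.1 he
    have him := congrArg Complex.im hn
    simp only [Complex.mul_im, Complex.ofReal_re, Complex.I_im, Complex.ofReal_im,
      Complex.I_re, Complex.add_im, Complex.mul_re] at him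
    -- him : t1 = ... linear relation
    have hreal : t1 = t2 + (n:ℝ) * (2 * Real.pi) := by
      have hn' := hn
      have : ((t1:ℂ) * Complex.I).im = ((t2:ℂ) * Complex.I + (n:ℂ) * (2 * (Real.pi:ℂ) * Complex.I)).im := by
        rw [hn']
      simpa using this
    have hpi := Real.two_le_pi
    have hn0 : n = 0 := by
      by_contra hne
      have h1' : (1:ℝ) ≤ |(n:ℝ)| := by
        have : (1:ℤ) ≤ |n| := Int.one_le_abs hne
        calc (1:ℝ) = ((1:ℤ):ℝ) := by norm_num
        _ ≤ ((|n|:ℤ):ℝ) := by exact_mod_cast this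
        _ = |(n:ℝ)| := by push_cast; ring
      rcases abs_cases (n:ℝ) with ⟨ha, _⟩ | ⟨ha, _⟩ <;> rw [ha] at h1' <;>
        [skip; skip] <;> nlinarith [h1.1, h1.2, h2.1, h2.2]
    rw [hn0] at hreal
    simpa using hreal
  have hinf : ((fun t : ℝ => Complex.exp ((t:ℂ) * Complex.I)) '' (Set.Ioo 0 1)).Infinite :=
    (Set.Ioo_infinite (by norm_num)).image hmap
  obtain ⟨d, hdE, hdB⟩ := (hinf.diff hBadFin).nonempty
  obtain ⟨t, _, hdt⟩ := hdE
  have hd1 : ‖d‖ = 1 := by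
    rw [← hdt]
    simp only
    rw [Complex.norm_exp]
    simp
  refine ⟨d, hd1, ?_⟩
  intro v hv hre
  exact hdB (Set.mem_biUnion hv ⟨hd1, hre⟩)
/-- `σ` is a similarity of the plane with (positive) ratio `r`. -/
def IsSimilarityMap (σ : ℂ → ℂ) (r : ℝ) : Prop :=
  ∀ p q : ℂ, dist (σ p) (σ q) = r * dist p q

/-- The size of a shape: the number of lattice vertices lying in it. -/
noncomputable def shapeSize (S : Set ℂ) : ℕ := (TriLattice ∩ S).ncard

/-- Two sets are similar (equivalent shapes). -/
def SimilarShapes (S T : Set ℂ) : Prop :=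
  ∃ σ : ℂ → ℂ, ∃ r : ℝ, 0 < r ∧ IsSimilarityMap σ r ∧ T = σ '' S

/-- A minimal shape: no equivalent shape has smaller size. -/
def MinimalShape (S : Set ℂ) : Prop :=
  IsShape S ∧ ∀ T : Set ℂ, IsShape T → SimilarShapes S T → shapeSize S ≤ shapeSize T

lemma diff_fin {F : Set (Set ℂ)} (hFfin : F.Finite) (Vf : Set ℂ → Finset ℂ) :
    (⋃ e ∈ F, {z : ℂ | ∃ p ∈ Vf e, ∃ q ∈ Vf e, p ≠ q ∧ z = p - q}).Finite := by
  apply Set.Finite.biUnion hFfin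
  intro e _
  apply Set.Finite.subset
    (Set.Finite.image (fun pq : ℂ × ℂ => pq.1 - pq.2)
      (((Vf e).finite_toSet.prod (Vf e).finite_toSet)))
  rintro z ⟨p, hp, q, hq, _, rfl⟩
  exact ⟨(p, q), ⟨Finset.mem_coe.mpr hp, Finset.mem_coe.mpr hq⟩, rfl⟩

/-- An isometry between lattice shapes maps lattice vertices to lattice
vertices. -/
theorem isometry_maps_lattice_vertices (S S' : Set ℂ) (σ : ℂ → ℂ)
    (hS : IsShape S) (hS' : MinimalShape S')
    (hσ : IsSimilarityMap σ 1) (heq : S = σ '' S') :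
    ∀ p : ℂ, p ∈ TriLattice ↔ σ p ∈ TriLattice := by
  classical
  obtain ⟨hSne, -, F, hFfin, hFd, hSF⟩ := hS
  obtain ⟨⟨hS'ne, -, F', hF'fin, hF'd, hS'F⟩, -⟩ := hS'
  obtain ⟨Vf, hV⟩ := shape_pieces hFd
  obtain ⟨Vf', hV'⟩ := shape_pieces hF'd
  have hdist : ∀ p q : ℂ, ‖σ p - σ q‖ = ‖p - q‖ := by
    intro p q
    have h := hσ p q
    rwa [one_mul, Complex.dist_eq, Complex.dist_eq] at h
  obtain ⟨a, b, ha, hcase⟩ := isometry_class hdist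
  have hna : Complex.normSq a = 1 := by rw [← Complex.sq_norm, ha]; norm_num
  have haa : a * (starRingEnd ℂ) a = 1 := by rw [Complex.mul_conj, hna]; simp
  have ha0 : a ≠ 0 := by intro h; rw [h] at ha; simp at ha
  -- generic direction
  set W1 : Set ℂ := ⋃ e ∈ F, {z : ℂ | ∃ p ∈ Vf e, ∃ q ∈ Vf e, p ≠ q ∧ z = p - q} with hW1d
  set W2 : Set ℂ := ⋃ e ∈ F', {z : ℂ | ∃ p ∈ Vf' e, ∃ q ∈ Vf' e, p ≠ q ∧ z = p - q} with hW2d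
  set W : Set ℂ := W1 ∪ ((fun v => a * v) '' W2) ∪ ((fun v => a * (starRingEnd ℂ) v) '' W2)
    with hWd
  have hWfin : W.Finite :=
    (((diff_fin hFfin Vf).union ((diff_fin hF'fin Vf').image _)).union
      ((diff_fin hF'fin Vf').image _))
  have hW2ne0 : ∀ v ∈ W2, v ≠ 0 := by
    intro v hv h0
    rw [hW2d] at hv
    simp only [Set.mem_iUnion, Set.mem_setOf_eq] at hv
    obtain ⟨s, -, p, hp, q, hq, hpq, hz⟩ := hv
    rw [h0] at hz
    exact hpq (sub_eq_zero.1 hz.symm)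
  have hW0 : (0:ℂ) ∉ W := by
    rw [hWd]
    rintro ((h | h) | h)
    · rw [hW1d] at h
      simp only [Set.mem_iUnion, Set.mem_setOf_eq] at h
      obtain ⟨s, -, p, hp, q, hq, hpq, hz⟩ := h
      exact hpq (sub_eq_zero.1 hz.symm)
    · obtain ⟨v, hv, hav⟩ := h
      rcases mul_eq_zero.1 hav with h' | h'
      · exact ha0 h'
      · exact hW2ne0 v hv h'
    · obtain ⟨v, hv, hav⟩ := h
      rcases mul_eq_zero.1 hav with h' | h'
      · exact ha0 h'
      · exact hW2ne0 v hv (by simpa using congrArg (starRingEnd ℂ) h')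
  obtain ⟨d, hd1, hd⟩ := exists_generic hWfin hW0
  set u : ℂ := (starRingEnd ℂ) d with hud
  have hu1 : ‖u‖ = 1 := by rw [hud, Complex.norm_conj, hd1]
  have hgenS : ∀ e ∈ F, ∀ p ∈ Vf e, ∀ q ∈ Vf e, p ≠ q → phi u p ≠ phi u q := by
    intro e he p hp q hq hpq hphi
    apply hd (p - q) (by
      rw [hWd]
      exact Or.inl (Or.inl (by
        rw [hW1d]
        exact Set.mem_biUnion he ⟨p, hp, q, hq, hpq, rfl⟩)))
    simp only [phi] at hphi
    rw [mul_sub, Complex.sub_re]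
    linarith [hphi.le, hphi.ge]
  rcases hcase with hlin | hconj
  · -- rotation case : σ z = a z + b
    set u' : ℂ := u * a with hu'd
    have hu'1 : ‖u'‖ = 1 := by rw [hu'd, norm_mul, hu1, ha, mul_one]
    have hgenS' : ∀ e ∈ F', ∀ p ∈ Vf' e, ∀ q ∈ Vf' e, p ≠ q → phi u' p ≠ phi u' q := by
      intro e he p hp q hq hpq hphi
      apply hd (a * (p - q)) (by
        rw [hWd]
        exact Or.inl (Or.inr ⟨p - q, by
          rw [hW2d]
          exact Set.mem_biUnion he ⟨p, hp, q, hq, hpq, rfl⟩, rfl⟩))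
      simp only [phi] at hphi
      rw [show u * (a * (p - q)) = u' * p - u' * q by rw [hu'd]; ring, Complex.sub_re]
      linarith [hphi.le, hphi.ge]
    obtain ⟨y, hyS', hymax⟩ := ext1 hF'fin hV' hS'F hS'ne u'
    set x : ℂ := σ y with hx
    have hxy : x = a * y + b := by rw [hx, hlin y]
    have hxS : x ∈ S := by rw [heq]; exact ⟨y, hyS', rfl⟩
    have hrel : ∀ z : ℂ, phi u (σ z) = phi u' z + phi u b := by
      intro z
      simp only [phi]
      rw [hlin z, mul_add, Complex.add_re, hu'd, ← mul_assoc]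
    have hxmax : ∀ z ∈ S, phi u z ≤ phi u x := by
      intro z hz
      rw [heq] at hz
      obtain ⟨z', hz', rfl⟩ := hz
      rw [hrel z', hx, hrel y]
      linarith [hymax z' hz']
    obtain ⟨hxLat, ε1, hε1pos, hε1le, T1, hT1ne, hT1prop, hT1cov⟩ :=
      ext2 hFfin hV hSF hgenS hxS hxmax
    obtain ⟨hyLat, ε2, hε2pos, hε2le, T2, hT2ne, hT2prop, hT2cov⟩ :=
      ext2 hF'fin hV' hS'F hgenS' hyS' hymax
    set ε : ℝ := min ε1 ε2 with hεd
    have hεpos : 0 < ε := lt_min hε1pos hε2pos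
    have hεle1 : ε ≤ ε1 := min_le_left _ _
    have hεle2 : ε ≤ ε2 := min_le_right _ _
    -- cover claims
    have hT1neg : ∀ ζ ∈ T1, (u * ζ).re < 0 := by
      intro ζ hζ
      obtain ⟨-, hζ1, hζmem⟩ := hT1prop ζ hζ
      exact (hT1cov ζ (ε/2) hζ1 (by linarith) (by linarith) (hζmem (ε/2) (by linarith) (by linarith))).1
    have hT2neg : ∀ ζ ∈ T2, (u' * ζ).re < 0 := by
      intro ζ hζ
      obtain ⟨-, hζ1, hζmem⟩ := hT2prop ζ hζ
      exact (hT2cov ζ (ε/2) hζ1 (by linarith) (by linarith) (hζmem (ε/2) (by linarith) (by linarith))).1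
    obtain ⟨m, hmT1, hmmax⟩ := T1.exists_max_image (tau u) hT1ne
    obtain ⟨m', hm'T2, hm'max⟩ := T2.exists_max_image (tau u') hT2ne
    have hcovmax : ∀ e : ℂ, ‖e‖ = 1 →
        (∃ t : ℝ, 0 < t ∧ t < ε ∧ x + (t:ℂ) * e ∈ S) →
        (u * e).re < 0 ∧ tau u e ≤ tau u m := by
      rintro e he ⟨t, ht, htε, hmem⟩
      obtain ⟨hneg, ⟨ζ, hζT, him⟩, -⟩ := hT1cov e t he ht (by linarith) hmem
      exact ⟨hneg, le_trans (tau_le_of_im hu1 hneg (hT1neg ζ hζT) him) (hmmax ζ hζT)⟩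
    have hcovmax' : ∀ e : ℂ, ‖e‖ = 1 →
        (∃ t : ℝ, 0 < t ∧ t < ε ∧ y + (t:ℂ) * e ∈ S') →
        (u' * e).re < 0 ∧ tau u' e ≤ tau u' m' := by
      rintro e he ⟨t, ht, htε, hmem⟩
      obtain ⟨hneg, ⟨ζ, hζT, him⟩, -⟩ := hT2cov e t he ht (by linarith) hmem
      exact ⟨hneg, le_trans (tau_le_of_im hu'1 hneg (hT2neg ζ hζT) him) (hm'max ζ hζT)⟩
    -- transfer m' into directions at x
    have hm'1 : ‖m'‖ = 1 := (hT2prop m' hm'T2).2.1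
    have hm1 : ‖m‖ = 1 := (hT1prop m hmT1).2.1
    obtain ⟨ham'neg, ham'tau⟩ := hcovmax (a * m')
      (by rw [norm_mul, ha, one_mul, hm'1])
      (by
        refine ⟨ε/2, by linarith, by linarith, ?_⟩
        have hmem' : y + ((ε/2 : ℝ) : ℂ) * m' ∈ S' :=
          (hT2prop m' hm'T2).2.2 (ε/2) (by linarith) (by linarith)
        have himg : σ (y + ((ε/2 : ℝ) : ℂ) * m') ∈ S := by
          rw [heq]; exact ⟨_, hmem', rfl⟩
        rw [hlin] at himg
        rw [show a * (y + ((ε/2 : ℝ) : ℂ) * m') + b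
            = x + ((ε/2 : ℝ) : ℂ) * (a * m') by rw [hxy]; ring] at himg
        exact himg)
    -- reverse transfer of m into directions at y
    obtain ⟨hrevneg, hrevtau⟩ := hcovmax' ((starRingEnd ℂ) a * m)
      (by rw [norm_mul, Complex.norm_conj, ha, one_mul, hm1])
      (by
        refine ⟨ε/2, by linarith, by linarith, ?_⟩
        have hmem1 : x + ((ε/2 : ℝ) : ℂ) * m ∈ S :=
          (hT1prop m hmT1).2.2 (ε/2) (by linarith) (by linarith)
        rw [heq] at hmem1
        obtain ⟨z', hz'S', hz'⟩ := hmem1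
        rw [hlin] at hz'
        have hz'eq : z' = y + ((ε/2 : ℝ) : ℂ) * ((starRingEnd ℂ) a * m) := by
          apply mul_left_cancel₀ ha0
          have h2 : a * z' = a * y + ((ε/2 : ℝ) : ℂ) * m := by
            have : a * z' + b = x + ((ε/2 : ℝ) : ℂ) * m := hz'
            rw [hxy] at this
            linear_combination this
          rw [h2, show a * (y + ((ε/2 : ℝ) : ℂ) * ((starRingEnd ℂ) a * m))
            = a * y + ((ε/2 : ℝ) : ℂ) * ((a * (starRingEnd ℂ) a) * m) by ring, haa]
          ring
        rw [← hz'eq]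
        exact hz'S')
    -- tau identities
    have id1 : tau u (a * m') = tau u' m' := by
      rw [tau, tau, show u * (a * m') = u' * m' by rw [hu'd]; ring]
    have id2 : tau u' ((starRingEnd ℂ) a * m) = tau u m := by
      rw [tau, tau, show u' * ((starRingEnd ℂ) a * m) = u * m by
        rw [hu'd, show u * a * ((starRingEnd ℂ) a * m)
          = u * ((a * (starRingEnd ℂ) a) * m) by ring, haa, one_mul]]
    rw [id1] at ham'tau
    rw [id2] at hrevtau
    have heqtau : tau u (a * m') = tau u m := by rw [id1]; linarith
    have hm_eq : a * m' = m := tau_antisymm hu1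
      (by rw [norm_mul, ha, one_mul, hm'1]) hm1 ham'neg (hT1neg m hmT1) heqtau
    -- lattice membership of a and b
    have hm'lat : m' ∈ TriLattice := (hT2prop m' hm'T2).1
    have hmlat : m ∈ TriLattice := (hT1prop m hmT1).1
    have hm'0 : m' ≠ 0 := by
      intro h; rw [h] at hm'1; simp at hm'1
    have hm'm' : (starRingEnd ℂ) m' * m' = 1 := by
      rw [mul_comm, Complex.mul_conj, show Complex.normSq m' = 1 by
        rw [← Complex.sq_norm, hm'1]; norm_num]
      simp
    have haLat : a ∈ TriLattice := by
      have : a = m * (starRingEnd ℂ) m' := by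
        apply mul_right_cancel₀ hm'0
        rw [hm_eq, mul_assoc, hm'm', mul_one]
      rw [this]
      exact TriLattice.mul_mem hmlat (TriLattice.conj_mem hm'lat)
    have hbLat : b ∈ TriLattice := by
      have : b = x - a * y := by rw [hxy]; ring
      rw [this]
      exact TriLattice.sub_mem hxLat (TriLattice.mul_mem haLat hyLat)
    intro p
    constructor
    · intro hp
      rw [hlin p]
      exact TriLattice.add_mem (TriLattice.mul_mem haLat hp) hbLat
    · intro hp
      have hpe : p = (starRingEnd ℂ) a * (σ p - b) := by
        rw [hlin p, show a * p + b - b = a * p by ring, ← mul_assoc,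
          mul_comm ((starRingEnd ℂ) a) a, haa, one_mul]
      rw [hpe]
      exact TriLattice.mul_mem (TriLattice.conj_mem haLat) (TriLattice.sub_mem hp hbLat)
  · -- reflection case : σ z = a conj z + b
    set u' : ℂ := (starRingEnd ℂ) (u * a) with hu'd
    have hu'1 : ‖u'‖ = 1 := by
      rw [hu'd, Complex.norm_conj, norm_mul, hu1, ha, mul_one]
    have haa' : (starRingEnd ℂ) a * a = 1 := by rw [mul_comm]; exact haa
    have hkey : ∀ w : ℂ, (u * (a * (starRingEnd ℂ) w)).re = (u' * w).re := by
      intro w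
      rw [show u' * w = (starRingEnd ℂ) (u * (a * (starRingEnd ℂ) w)) by
        rw [hu'd]; simp only [map_mul, Complex.conj_conj]; ring, Complex.conj_re]
    have hgenS' : ∀ e ∈ F', ∀ p ∈ Vf' e, ∀ q ∈ Vf' e, p ≠ q → phi u' p ≠ phi u' q := by
      intro e he p hp q hq hpq hphi
      apply hd (a * (starRingEnd ℂ) (p - q)) (by
        rw [hWd]
        exact Or.inr ⟨p - q, by
          rw [hW2d]
          exact Set.mem_biUnion he ⟨p, hp, q, hq, hpq, rfl⟩, rfl⟩)
      simp only [phi] at hphi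
      rw [hkey (p - q), mul_sub, Complex.sub_re]
      linarith [hphi.le, hphi.ge]
    obtain ⟨y, hyS', hymax⟩ := ext1 hF'fin hV' hS'F hS'ne u'
    set x : ℂ := σ y with hx
    have hxy : x = a * (starRingEnd ℂ) y + b := by rw [hx, hconj y]
    have hxS : x ∈ S := by rw [heq]; exact ⟨y, hyS', rfl⟩
    have hrel : ∀ z : ℂ, phi u (σ z) = phi u' z + phi u b := by
      intro z
      simp only [phi]
      rw [hconj z, mul_add, Complex.add_re, hkey z]
    have hxmax : ∀ z ∈ S, phi u z ≤ phi u x := by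
      intro z hz
      rw [heq] at hz
      obtain ⟨z', hz', rfl⟩ := hz
      rw [hrel z', hx, hrel y]
      linarith [hymax z' hz']
    obtain ⟨hxLat, ε1, hε1pos, hε1le, T1, hT1ne, hT1prop, hT1cov⟩ :=
      ext2 hFfin hV hSF hgenS hxS hxmax
    obtain ⟨hyLat, ε2, hε2pos, hε2le, T2, hT2ne, hT2prop, hT2cov⟩ :=
      ext2 hF'fin hV' hS'F hgenS' hyS' hymax
    set ε : ℝ := min ε1 ε2 with hεd
    have hεpos : 0 < ε := lt_min hε1pos hε2pos
    have hεle1 : ε ≤ ε1 := min_le_left _ _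
    have hεle2 : ε ≤ ε2 := min_le_right _ _
    have hT1neg : ∀ ζ ∈ T1, (u * ζ).re < 0 := by
      intro ζ hζ
      obtain ⟨-, hζ1, hζmem⟩ := hT1prop ζ hζ
      exact (hT1cov ζ (ε/2) hζ1 (by linarith) (by linarith)
        (hζmem (ε/2) (by linarith) (by linarith))).1
    have hT2neg : ∀ ζ ∈ T2, (u' * ζ).re < 0 := by
      intro ζ hζ
      obtain ⟨-, hζ1, hζmem⟩ := hT2prop ζ hζ
      exact (hT2cov ζ (ε/2) hζ1 (by linarith) (by linarith)
        (hζmem (ε/2) (by linarith) (by linarith))).1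
    obtain ⟨m, hmT1, hmmax⟩ := T1.exists_max_image (tau u) hT1ne
    obtain ⟨m'', hm''T2, hm''min⟩ := T2.exists_min_image (tau u') hT2ne
    have hcovmax : ∀ e : ℂ, ‖e‖ = 1 →
        (∃ t : ℝ, 0 < t ∧ t < ε ∧ x + (t:ℂ) * e ∈ S) →
        (u * e).re < 0 ∧ tau u e ≤ tau u m := by
      rintro e he ⟨t, ht, htε, hmem⟩
      obtain ⟨hneg, ⟨ζ, hζT, him⟩, -⟩ := hT1cov e t he ht (by linarith) hmem
      exact ⟨hneg, le_trans (tau_le_of_im hu1 hneg (hT1neg ζ hζT) him) (hmmax ζ hζT)⟩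
    have hcovmin' : ∀ e : ℂ, ‖e‖ = 1 →
        (∃ t : ℝ, 0 < t ∧ t < ε ∧ y + (t:ℂ) * e ∈ S') →
        (u' * e).re < 0 ∧ tau u' m'' ≤ tau u' e := by
      rintro e he ⟨t, ht, htε, hmem⟩
      obtain ⟨hneg, -, ⟨ζ, hζT, him⟩⟩ := hT2cov e t he ht (by linarith) hmem
      exact ⟨hneg, le_trans (hm''min ζ hζT) (tau_ge_of_im hu'1 hneg (hT2neg ζ hζT) him)⟩
    have hm''1 : ‖m''‖ = 1 := (hT2prop m'' hm''T2).2.1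
    have hm1 : ‖m‖ = 1 := (hT1prop m hmT1).2.1
    obtain ⟨ham''neg, ham''tau⟩ := hcovmax (a * (starRingEnd ℂ) m'')
      (by rw [norm_mul, ha, one_mul, Complex.norm_conj, hm''1])
      (by
        refine ⟨ε/2, by linarith, by linarith, ?_⟩
        have hmem' : y + ((ε/2 : ℝ) : ℂ) * m'' ∈ S' :=
          (hT2prop m'' hm''T2).2.2 (ε/2) (by linarith) (by linarith)
        have himg : σ (y + ((ε/2 : ℝ) : ℂ) * m'') ∈ S := by
          rw [heq]; exact ⟨_, hmem', rfl⟩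
        rw [hconj] at himg
        rw [show a * ((starRingEnd ℂ) (y + ((ε/2 : ℝ) : ℂ) * m'')) + b
            = x + ((ε/2 : ℝ) : ℂ) * (a * (starRingEnd ℂ) m'') by
          rw [map_add, map_mul, Complex.conj_ofReal, hxy]; ring] at himg
        exact himg)
    obtain ⟨hrevneg, hrevtau⟩ := hcovmin' (a * (starRingEnd ℂ) m)
      (by rw [norm_mul, ha, one_mul, Complex.norm_conj, hm1])
      (by
        refine ⟨ε/2, by linarith, by linarith, ?_⟩
        have hmem1 : x + ((ε/2 : ℝ) : ℂ) * m ∈ S :=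
          (hT1prop m hmT1).2.2 (ε/2) (by linarith) (by linarith)
        rw [heq] at hmem1
        obtain ⟨z', hz'S', hz'⟩ := hmem1
        rw [hconj] at hz'
        have h2 : a * (starRingEnd ℂ) z' = a * (starRingEnd ℂ) y + ((ε/2 : ℝ) : ℂ) * m := by
          rw [hxy] at hz'
          linear_combination hz'
        have h3 : (starRingEnd ℂ) z'
            = (starRingEnd ℂ) y + ((ε/2 : ℝ) : ℂ) * ((starRingEnd ℂ) a * m) := by
          apply mul_left_cancel₀ ha0
          rw [h2, show a * ((starRingEnd ℂ) y + ((ε/2 : ℝ) : ℂ) * ((starRingEnd ℂ) a * m))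
            = a * (starRingEnd ℂ) y + ((ε/2 : ℝ) : ℂ) * ((a * (starRingEnd ℂ) a) * m) by ring,
            haa]
          ring
        have h4 : z' = y + ((ε/2 : ℝ) : ℂ) * (a * (starRingEnd ℂ) m) := by
          have h5 := congrArg (starRingEnd ℂ) h3
          rwa [Complex.conj_conj, map_add, map_mul, map_mul, Complex.conj_conj,
            Complex.conj_conj, Complex.conj_ofReal] at h5
        rw [← h4]
        exact hz'S')
    have idc1 : tau u (a * (starRingEnd ℂ) m'') = - tau u' m'' := by
      have hzc : u * (a * (starRingEnd ℂ) m'') = (starRingEnd ℂ) (u' * m'') := by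
        rw [hu'd]
        simp only [map_mul, Complex.conj_conj]
        ring
      rw [tau, tau, hzc, Complex.conj_im, Complex.conj_re, neg_div]
    have idc2 : tau u' (a * (starRingEnd ℂ) m) = - tau u m := by
      have hzc : u' * (a * (starRingEnd ℂ) m) = (starRingEnd ℂ) (u * m) := by
        rw [hu'd, map_mul, map_mul]
        rw [show (starRingEnd ℂ) u * (starRingEnd ℂ) a * (a * (starRingEnd ℂ) m)
          = ((starRingEnd ℂ) a * a) * ((starRingEnd ℂ) u * (starRingEnd ℂ) m) by ring,
          haa', one_mul]
      rw [tau, tau, hzc, Complex.conj_im, Complex.conj_re, neg_div]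
    rw [idc1] at ham''tau
    rw [idc2] at hrevtau
    have heqtau : tau u (a * (starRingEnd ℂ) m'') = tau u m := by rw [idc1]; linarith
    have hm_eq : a * (starRingEnd ℂ) m'' = m := tau_antisymm hu1
      (by rw [norm_mul, ha, one_mul, Complex.norm_conj, hm''1]) hm1 ham''neg
      (hT1neg m hmT1) heqtau
    have hm''lat : m'' ∈ TriLattice := (hT2prop m'' hm''T2).1
    have hmlat : m ∈ TriLattice := (hT1prop m hmT1).1
    have hm''0 : (starRingEnd ℂ) m'' ≠ 0 := by
      intro h
      have : m'' = 0 := by simpa using congrArg (starRingEnd ℂ) h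
      rw [this] at hm''1; simp at hm''1
    have hm''m'' : m'' * (starRingEnd ℂ) m'' = 1 := by
      rw [Complex.mul_conj, show Complex.normSq m'' = 1 by
        rw [← Complex.sq_norm, hm''1]; norm_num]
      simp
    have haLat : a ∈ TriLattice := by
      have : a = m * m'' := by
        apply mul_right_cancel₀ hm''0
        rw [hm_eq, mul_assoc, hm''m'', mul_one]
      rw [this]
      exact TriLattice.mul_mem hmlat hm''lat
    have hbLat : b ∈ TriLattice := by
      have : b = x - a * (starRingEnd ℂ) y := by rw [hxy]; ring
      rw [this]
      exact TriLattice.sub_mem hxLat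
        (TriLattice.mul_mem haLat (TriLattice.conj_mem hyLat))
    intro p
    constructor
    · intro hp
      rw [hconj p]
      exact TriLattice.add_mem
        (TriLattice.mul_mem haLat (TriLattice.conj_mem hp)) hbLat
    · intro hp
      have hpe : (starRingEnd ℂ) p = (starRingEnd ℂ) a * (σ p - b) := by
        rw [hconj p, show a * (starRingEnd ℂ) p + b - b = a * (starRingEnd ℂ) p by ring,
          ← mul_assoc, mul_comm ((starRingEnd ℂ) a) a, haa, one_mul]
      have hpp : p = (starRingEnd ℂ) ((starRingEnd ℂ) p) := (Complex.conj_conj p).symm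
      rw [hpp, hpe]
      exact TriLattice.conj_mem
        (TriLattice.mul_mem (TriLattice.conj_mem haLat) (TriLattice.sub_mem hp hbLat))
end

section
/- Feasibility inequality for the linear case of role assignment: let B, C, k be positive integers, and define P(λ) = B·λ + C. Suppose λ is an integer with λ ≥ 7, n/k > P(λ − 6), and P(λ) ≥ n/k, for some positive integer n divisible by k. If n ≥ (12B+1)·k·(B+C), then (λ−1)/2 ≥ P(λ) − n/k. -/
/-- feasibility inequality for the linear case of role assignment, where
`P(λ) = Bλ + C`. -/
theorem role_assignment_linear_case (B C k n lam : ℤ)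
    (hB : 0 < B) (hC : 0 < C) (hk : 0 < k) (hn : 0 < n) (hdvd : k ∣ n)
    (hlam : 7 ≤ lam)
    (hprev : n / k > B * (lam - 6) + C)
    (hcur : B * lam + C ≥ n / k)
    (hbig : n ≥ (12 * B + 1) * k * (B + C)) :
    (lam - 1) / 2 ≥ B * lam + C - n / k := by
  obtain ⟨m, rfl⟩ := hdvd
  rw [Int.mul_ediv_cancel_left _ hk.ne'] at hprev hcur ⊢
  have hm : m ≥ (12 * B + 1) * (B + C) := by
    have : k * ((12 * B + 1) * (B + C)) ≤ k * m := by linarith [hbig]; 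
    exact le_of_mul_le_mul_left this hk
  have h1 : B * lam + C - m ≤ 6 * B - 1 := by nlinarith
  have h2 : 12 * B + 1 ≤ lam := by nlinarith
  have h3 : 6 * B ≤ (lam - 1) / 2 := by omega
  linarith
end
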